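/- For every odd positive integer k and d = 2k + 1, the multiset over Z_2^d of length 2d + 2 consisting of the elements 0, e_1, e_2, ..., e_{d-1}, e_1 + e_2 + ... + e_{d-1}, e_d, e_d + e_1, e_d + e_2, ..., e_d + e_{d-1}, and e_d + e_1 + e_2 + ... + e_{d-1}, is a zero-sum sequence that contains no zero-sum subsequence of length 2k. -/

import Mathlib

private lemma multiset_split {α : Type*} [DecidableEq α] {T A B : Multiset α}
    (h : T ≤ A + B) : ∃ U V, U ≤ A ∧ V ≤ B ∧ T = U + V := by
  refine ⟨T ∩ A, T - A, Multiset.inter_le_right, ?_, ?_⟩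
  · rw [Multiset.sub_le_iff_le_add]; rwa [add_comm]
  · ext x
    rw [Multiset.count_add, Multiset.count_inter, Multiset.count_sub]
    omega

private lemma multiset_le_map {α β : Type*} [DecidableEq α] [DecidableEq β] {f : α → β} {t : Multiset α} :
    ∀ {s : Multiset β}, s ≤ Multiset.map f t → ∃ u, u ≤ t ∧ s = Multiset.map f u := by
  induction t using Multiset.induction_on with
  | empty =>
    intro s hs
    simp only [Multiset.map_zero, Multiset.le_zero] at hs
    exact ⟨0, le_refl _, by simp [hs]⟩
  | cons a t ih =>
    intro s hs
    rw [Multiset.map_cons] at hs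
    by_cases hm : f a ∈ s
    · have h1 : s.erase (f a) ≤ Multiset.map f t := by
        have h2 := Multiset.erase_le_erase (f a) hs
        rwa [Multiset.erase_cons_head] at h2
      obtain ⟨u, hu, hsu⟩ := ih h1
      refine ⟨a ::ₘ u, Multiset.cons_le_cons _ hu, ?_⟩
      rw [Multiset.map_cons, ← hsu]
      exact (Multiset.cons_erase hm).symm
    · rw [Multiset.le_cons_of_notMem hm] at hs
      obtain ⟨u, hu, hsu⟩ := ih hs
      exact ⟨u, le_trans hu (Multiset.le_cons_self _ _), hsu⟩

private lemma le_singleton_sum {α : Type*} [AddCommMonoid α] {U : Multiset α} {x : α}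
    (h : U ≤ {x}) : ∃ n : ℕ, n ≤ 1 ∧ Multiset.card U = n ∧ U.sum = n • x := by
  rcases Multiset.le_singleton.mp h with h | h <;> subst h
  · exact ⟨0, by simp, by simp, by simp⟩
  · exact ⟨1, le_refl _, by simp, by simp⟩

theorem construction_d_eq_two_k_add_one (k : ℕ) (hk : Odd k) (hk0 : 0 < k)
    (d : ℕ) (hd : d = 2 * k + 1) :
    let e : Fin d → (Fin d → ZMod 2) := fun j => Pi.single j 1
    let last : Fin d := ⟨d - 1, by omega⟩
    let S : Multiset (Fin d → ZMod 2) :=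
      {0} + Multiset.map e (Finset.univ.erase last).val
        + {∑ j ∈ Finset.univ.erase last, e j}
        + {e last} + Multiset.map (fun j => e last + e j) (Finset.univ.erase last).val
        + {e last + ∑ j ∈ Finset.univ.erase last, e j}
    Multiset.card S = 2 * d + 2 ∧ S.sum = 0 ∧
      ¬ ∃ T ≤ S, Multiset.card T = 2 * k ∧ T.sum = 0 := by
  intro e last S
  have hcard_erase : (Finset.univ.erase last).card = 2 * k := by
    rw [Finset.card_erase_of_mem (Finset.mem_univ _), Finset.card_univ, Fintype.card_fin]; omega
  have h2 : ∀ x : Fin d → ZMod 2, x + x = 0 := by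
    intro x; funext i
    show x i + x i = 0
    exact CharTwo.add_self_eq_zero _
  have he_self : ∀ j, e j j = 1 := by intro j; simp [e]
  have he_ne : ∀ i j, i ≠ j → e j i = 0 := by
    intro i j hij; exact Pi.single_eq_of_ne hij 1
  have hsAll_last : (∑ j ∈ Finset.univ.erase last, e j) last = 0 := by
    rw [Finset.sum_apply]
    exact Finset.sum_eq_zero fun j hj => he_ne _ _ (Ne.symm (Finset.ne_of_mem_erase hj))
  have hsAll_mem : ∀ i ∈ Finset.univ.erase last, (∑ j ∈ Finset.univ.erase last, e j) i = 1 := by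
    intro i hi
    rw [Finset.sum_apply]
    rw [Finset.sum_eq_single_of_mem i hi (fun j _ hne => he_ne i j (Ne.symm hne))]
    exact he_self i
  refine ⟨?_, ?_, ?_⟩
  · show Multiset.card _ = 2 * d + 2
    simp only [S, Multiset.card_add, Multiset.card_map, Multiset.card_singleton]
    show 1 + (Finset.univ.erase last).card + 1 + 1 + (Finset.univ.erase last).card + 1 = 2 * d + 2
    rw [hcard_erase]; omega
  · show Multiset.sum _ = 0
    simp only [S, Multiset.sum_add, Multiset.sum_singleton]
    rw [← Finset.sum_eq_multiset_sum, ← Finset.sum_eq_multiset_sum]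
    rw [Finset.sum_add_distrib, Finset.sum_const, hcard_erase]
    rw [mul_smul]
    rw [two_smul, h2]
    simp only [zero_add]
    rw [h2, zero_add, h2]
  · rintro ⟨T, hTS, hTcard, hTsum⟩
    obtain ⟨T5, U6, hT5, hU6, rfl⟩ := multiset_split hTS
    obtain ⟨T4, M2, hT4, hM2, rfl⟩ := multiset_split hT5
    obtain ⟨T3, U4, hT3, hU4, rfl⟩ := multiset_split hT4
    obtain ⟨T2, U3, hT2, hU3, rfl⟩ := multiset_split hT3
    obtain ⟨U1, M1, hU1, hM1, rfl⟩ := multiset_split hT2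
    obtain ⟨VA, hVA, rfl⟩ := multiset_le_map hM1
    obtain ⟨VB, hVB, rfl⟩ := multiset_le_map hM2
    obtain ⟨na, hna1, hnacard, hnasum⟩ := le_singleton_sum hU1
    obtain ⟨nb, hnb1, hnbcard, hnbsum⟩ := le_singleton_sum hU3
    obtain ⟨nc, hnc1, hnccard, hncsum⟩ := le_singleton_sum hU4
    obtain ⟨nf, hnf1, hnfcard, hnfsum⟩ := le_singleton_sum hU6
    have hVAnd : VA.Nodup := Multiset.nodup_of_le hVA (Finset.univ.erase last).nodup
    have hVBnd : VB.Nodup := Multiset.nodup_of_le hVB (Finset.univ.erase last).nodup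
    let A : Finset (Fin d) := ⟨VA, hVAnd⟩
    let B : Finset (Fin d) := ⟨VB, hVBnd⟩
    have hAEr : A ⊆ Finset.univ.erase last := fun x hx => Multiset.mem_of_le hVA hx
    have hBEr : B ⊆ Finset.univ.erase last := fun x hx => Multiset.mem_of_le hVB hx
    have hcardT : na + A.card + nb + nc + B.card + nf = 2 * k := by
      rw [Multiset.card_add, Multiset.card_add, Multiset.card_add, Multiset.card_add,
        Multiset.card_add, Multiset.card_map, Multiset.card_map,
        hnacard, hnbcard, hnccard, hnfcard] at hTcard
      exact hTcard
    have hsum : na • (0 : Fin d → ZMod 2) + (∑ j ∈ A, e j)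
        + nb • (∑ j ∈ Finset.univ.erase last, e j) + nc • (e last)
        + (∑ j ∈ B, (e last + e j))
        + nf • (e last + ∑ j ∈ Finset.univ.erase last, e j) = 0 := by
      rw [Multiset.sum_add, Multiset.sum_add, Multiset.sum_add, Multiset.sum_add,
        Multiset.sum_add, hnasum, hnbsum, hncsum, hnfsum] at hTsum
      exact hTsum
    have hA_ind : ∀ i, (∑ j ∈ A, e j) i = ((if i ∈ A then 1 else 0 : ℕ) : ZMod 2) := by
      intro i
      rw [Finset.sum_apply]
      simp only [e, Pi.single_apply]
      rw [Finset.sum_ite_eq]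
      split <;> simp
    have hB_last : (∑ j ∈ B, (e last + e j)) last = ((B.card : ℕ) : ZMod 2) := by
      rw [Finset.sum_apply]
      have hcong : ∀ j ∈ B, (e last + e j) last = 1 := by
        intro j hj
        have hj' : j ≠ last := Finset.ne_of_mem_erase (hBEr hj)
        show e last last + e j last = 1
        rw [he_self, he_ne last j (Ne.symm hj'), add_zero]
      rw [Finset.sum_congr rfl hcong, Finset.sum_const, nsmul_eq_mul, mul_one]
    have hB_ind : ∀ i ∈ Finset.univ.erase last,
        (∑ j ∈ B, (e last + e j)) i = ((if i ∈ B then 1 else 0 : ℕ) : ZMod 2) := by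
      intro i hi
      have hil : i ≠ last := Finset.ne_of_mem_erase hi
      rw [Finset.sum_apply]
      have hcong : ∀ j ∈ B, (e last + e j) i = if i = j then (1 : ZMod 2) else 0 := by
        intro j hj
        show e last i + e j i = _
        rw [he_ne i last hil, zero_add]
        simp [e, Pi.single_apply]
      rw [Finset.sum_congr rfl hcong, Finset.sum_ite_eq]
      split <;> simp
    -- last coordinate
    have hlastA : last ∉ A := fun h => absurd rfl (Finset.ne_of_mem_erase (hAEr h))
    have hl2 : (2 : ℕ) ∣ (nc + B.card + nf) := by
      have h := congrFun hsum last
      rw [Pi.add_apply, Pi.add_apply, Pi.add_apply, Pi.add_apply, Pi.add_apply,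
        Pi.zero_apply, Pi.smul_apply, Pi.smul_apply, Pi.smul_apply, Pi.smul_apply,
        Pi.zero_apply, smul_zero, hA_ind, if_neg hlastA, hsAll_last, smul_zero,
        hB_last, he_self] at h
      have h3 : (e last + ∑ j ∈ Finset.univ.erase last, e j) last = 1 := by
        show e last last + _ = 1
        rw [he_self, hsAll_last, add_zero]
      rw [h3] at h
      rw [← ZMod.natCast_eq_zero_iff]
      push_cast
      push_cast [nsmul_eq_mul] at h
      linear_combination h
    have hcoord : ∀ i ∈ Finset.univ.erase last,
        (2 : ℕ) ∣ ((if i ∈ A then 1 else 0) + nb + (if i ∈ B then 1 else 0) + nf) := by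
      intro i hi
      have hil : i ≠ last := Finset.ne_of_mem_erase hi
      have h := congrFun hsum i
      rw [Pi.add_apply, Pi.add_apply, Pi.add_apply, Pi.add_apply, Pi.add_apply,
        Pi.zero_apply, Pi.smul_apply, Pi.smul_apply, Pi.smul_apply, Pi.smul_apply,
        Pi.zero_apply, smul_zero, hA_ind, hsAll_mem i hi, he_ne i last hil, smul_zero,
        hB_ind i hi] at h
      have h3 : (e last + ∑ j ∈ Finset.univ.erase last, e j) i = 1 := by
        show e last i + _ = 1
        rw [he_ne i last hil, hsAll_mem i hi, zero_add]
      rw [h3] at h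
      rw [← ZMod.natCast_eq_zero_iff]
      push_cast [apply_ite (Nat.cast : ℕ → ZMod 2)]
      push_cast [nsmul_eq_mul, apply_ite (Nat.cast : ℕ → ZMod 2)] at h
      linear_combination h
    have hAcard : ∑ i ∈ Finset.univ.erase last, (if i ∈ A then 1 else 0 : ℕ) = A.card := by
      rw [Finset.sum_ite_mem, Finset.inter_eq_right.mpr hAEr]
      simp
    have hBcard : ∑ i ∈ Finset.univ.erase last, (if i ∈ B then 1 else 0 : ℕ) = B.card := by
      rw [Finset.sum_ite_mem, Finset.inter_eq_right.mpr hBEr]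
      simp
    rw [Nat.odd_iff] at hk
    rcases Nat.even_or_odd (nb + nf) with hp | hp
    · rw [Nat.even_iff] at hp
      have hAB : ∀ i ∈ Finset.univ.erase last,
          (if i ∈ A then 1 else 0 : ℕ) = (if i ∈ B then 1 else 0) := by
        intro i hi
        have hc := hcoord i hi
        by_cases hiA : i ∈ A <;> by_cases hiB : i ∈ B <;>
          simp only [hiA, hiB, if_true, if_false] at hc ⊢ <;> omega
      have hABc : A.card = B.card := by
        rw [← hAcard, ← hBcard]
        exact Finset.sum_congr rfl hAB
      omega
    · rw [Nat.odd_iff] at hp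
      have hAB : ∀ i ∈ Finset.univ.erase last,
          (if i ∈ A then 1 else 0 : ℕ) + (if i ∈ B then 1 else 0) = 1 := by
        intro i hi
        have hc := hcoord i hi
        by_cases hiA : i ∈ A <;> by_cases hiB : i ∈ B <;>
          simp only [hiA, hiB, if_true, if_false] at hc ⊢ <;> omega
      have hABc : A.card + B.card = 2 * k := by
        have h1 : ∑ i ∈ Finset.univ.erase last,
            ((if i ∈ A then 1 else 0 : ℕ) + (if i ∈ B then 1 else 0)) = 2 * k := by
          rw [Finset.sum_congr rfl hAB, Finset.sum_const, smul_eq_mul, mul_one, hcard_erase]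
        rw [Finset.sum_add_distrib, hAcard, hBcard] at h1
        exact h1
      omega
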